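/- Let d ≥ 1 be an integer and ν > d/2 a real number. Then there exist constants 0 < A ≤ B < ∞ such that for every ω ∈ ℝ^d, A ≤ ∑_{k∈ℤ^d} (1 + ‖ω + 2πk‖²)^{−ν} ≤ B. -/

import Mathlib

open Real

private lemma aux_summable_h {μ : ℝ} (hμ : 1/2 < μ) :
    Summable (fun n : ℤ => (1 + π^2 * (n:ℝ)^2) ^ (-μ)) := by
  have hμ0 : 0 < μ := by linarith
  have hg : Summable (fun n : ℤ =>
      1 / |(n:ℝ)| ^ (2*μ) + (if n = (0:ℤ) then (1:ℝ) else 0)) := by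
    apply Summable.add
    · have := (Real.summable_one_div_int_add_rpow 0 (2*μ)).mpr (by linarith)
      simpa using this
    · exact (hasSum_ite_eq (0:ℤ) (1:ℝ)).summable
  refine Summable.of_nonneg_of_le (fun n => Real.rpow_nonneg (by positivity) _) (fun n => ?_) hg
  by_cases hn : n = 0
  · subst hn
    have l1 : ((1:ℝ) + π^2 * ((0:ℤ):ℝ)^2) ^ (-μ) = 1 := by norm_num
    have l2 : 1/|((0:ℤ):ℝ)| ^ (2*μ) = 0 := by
      rw [Int.cast_zero, abs_zero, Real.zero_rpow (by positivity)]
      simp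
    rw [l1, l2]; simp
  · have h1 : (0:ℝ) < (n:ℝ)^2 := by
      have : (n:ℝ) ≠ 0 := Int.cast_ne_zero.mpr hn
      positivity
    have h2 : (n:ℝ)^2 ≤ 1 + π^2 * (n:ℝ)^2 := by
      have hp : (0:ℝ) ≤ (π^2 - 1) * (n:ℝ)^2 :=
        mul_nonneg (by nlinarith [Real.pi_gt_three]) h1.le
      linarith
    have h3 : (1 + π^2 * (n:ℝ)^2) ^ (-μ) ≤ ((n:ℝ)^2) ^ (-μ) :=
      Real.rpow_le_rpow_of_nonpos h1 h2 (by linarith)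
    have h4 : ((n:ℝ)^2) ^ (-μ) = 1 / |(n:ℝ)| ^ (2*μ) := by
      rw [← sq_abs, ← Real.rpow_natCast |(n:ℝ)| 2, ← Real.rpow_mul (abs_nonneg _),
        show ((2:ℕ):ℝ) * -μ = -(2*μ) by push_cast; ring,
        Real.rpow_neg (abs_nonneg _), one_div]
    simp only [if_neg hn, add_zero]
    rw [← h4]; exact h3

private lemma aux_summable_pi (h : ℤ → ℝ) (h0 : ∀ n, 0 ≤ h n) (hs : Summable h) :
    ∀ n : ℕ, Summable (fun k : Fin n → ℤ => ∏ i, h (k i)) := by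
  intro n
  induction n with
  | zero => exact Summable.of_finite
  | succ m ih =>
    have key : Summable (fun p : ℤ × (Fin m → ℤ) => h p.1 * ∏ i, h (p.2 i)) := by
      apply Summable.mul_of_nonneg hs ih
      · intro x; exact h0 x
      · intro k; exact Finset.prod_nonneg fun i _ => h0 (k i)
    refine (Equiv.summable_iff (Fin.consEquiv (fun _ : Fin (m+1) => ℤ))).mp
      (key.congr fun p => ?_)
    simp only [Function.comp_apply, Fin.consEquiv_apply, Fin.prod_univ_succ,
      Fin.cons_zero, Fin.cons_succ]

private lemma aux_box {d : ℕ} (hd : 1 ≤ d) {ν : ℝ} (hν0 : 0 < ν)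
    (t : Fin d → ℝ) (ht : ∀ i, |t i| ≤ π) (k : Fin d → ℤ) :
    (1 + ∑ i, (t i + 2*π*(k i:ℝ))^2) ^ (-ν)
      ≤ ∏ i, (1 + π^2*(k i:ℝ)^2) ^ (-(ν/d)) := by
  have hd0 : (0:ℝ) < d := by exact_mod_cast hd
  have hdne : (d:ℝ) ≠ 0 := ne_of_gt hd0
  have hcoord : ∀ i, π^2 * (k i:ℝ)^2 ≤ (t i + 2*π*(k i:ℝ))^2 := by
    intro i
    by_cases hki : k i = 0
    · simp only [hki, Int.cast_zero]
      have : π^2 * (0:ℝ)^2 = 0 := by ring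
      rw [this]
      positivity
    · have ha : (1:ℝ) ≤ |(k i : ℝ)| := by
        have := Int.one_le_abs hki
        calc (1:ℝ) = ((1:ℤ):ℝ) := by norm_num
          _ ≤ ((|k i| : ℤ):ℝ) := by exact_mod_cast this
          _ = |(k i:ℝ)| := by push_cast; rfl
      have habs : π * |(k i:ℝ)| ≤ |t i + 2*π*(k i:ℝ)| := by
        have h1 : |2*π*(k i:ℝ)| = 2*π*|(k i:ℝ)| := by
          rw [abs_mul, abs_of_pos (by positivity : (0:ℝ) < 2*π)]
        have h2 : |2*π*(k i:ℝ)| ≤ |t i + 2*π*(k i:ℝ)| + |t i| := by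
          calc |2*π*(k i:ℝ)| = |(t i + 2*π*(k i:ℝ)) + (-(t i))| := by congr 1; ring
            _ ≤ |t i + 2*π*(k i:ℝ)| + |(-(t i))| := abs_add_le _ _
            _ = |t i + 2*π*(k i:ℝ)| + |t i| := by rw [abs_neg]
        have h3 : π ≤ π * |(k i:ℝ)| := by nlinarith [pi_pos]
        have h4 := ht i
        linarith [h1 ▸ h2]
      calc π^2*(k i:ℝ)^2 = (π*|(k i:ℝ)|)^2 := by rw [mul_pow, sq_abs]
        _ ≤ |t i + 2*π*(k i:ℝ)|^2 := by
            apply pow_le_pow_left₀ (by positivity) habs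
        _ = (t i + 2*π*(k i:ℝ))^2 := sq_abs _
  set X := 1 + ∑ i, (t i + 2*π*(k i:ℝ))^2 with hX
  have hX1 : (1:ℝ) ≤ X := le_add_of_nonneg_right
    (Finset.sum_nonneg fun i _ => sq_nonneg _)
  have hX0 : (0:ℝ) < X := by linarith
  have hfac : ∀ i, 1 + π^2*(k i:ℝ)^2 ≤ X := by
    intro i
    have hs : (t i + 2*π*(k i:ℝ))^2 ≤ ∑ j, (t j + 2*π*(k j:ℝ))^2 :=
      Finset.single_le_sum (f := fun j => (t j + 2*π*(k j:ℝ))^2) (fun j _ => sq_nonneg _) (Finset.mem_univ i)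
    have := hcoord i
    rw [hX]; linarith
  have hprodpos : (0:ℝ) < ∏ i : Fin d, (1 + π^2*(k i:ℝ)^2) :=
    Finset.prod_pos fun i _ => by positivity
  have hprod : ∏ i : Fin d, (1 + π^2*(k i:ℝ)^2) ≤ X ^ (d:ℕ) := by
    calc ∏ i : Fin d, (1 + π^2*(k i:ℝ)^2) ≤ ∏ _i : Fin d, X :=
        Finset.prod_le_prod (fun i _ => by positivity) (fun i _ => hfac i)
      _ = X ^ (d:ℕ) := by rw [Finset.prod_const, Finset.card_univ, Fintype.card_fin]
  have hXpow : X ^ (-ν) = (X ^ (d:ℕ)) ^ (-(ν/d)) := by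
    rw [← Real.rpow_natCast X d, ← Real.rpow_mul hX0.le]
    congr 1
    field_simp
  rw [hXpow]
  calc (X ^ (d:ℕ)) ^ (-(ν/d)) ≤ (∏ i : Fin d, (1 + π^2*(k i:ℝ)^2)) ^ (-(ν/d)) :=
      Real.rpow_le_rpow_of_nonpos hprodpos hprod (neg_nonpos.mpr (by positivity))
    _ = ∏ i, (1 + π^2*(k i:ℝ)^2) ^ (-(ν/d)) :=
      (Real.finset_prod_rpow _ _ (fun i _ => by positivity) _).symm

private lemma aux_master {d : ℕ} (hd : 1 ≤ d) {ν : ℝ} (hν : (d:ℝ)/2 < ν) (t : Fin d → ℝ) :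
    Summable (fun k : Fin d → ℤ => (1 + ∑ i, (t i + 2*π*(k i:ℝ))^2) ^ (-ν)) ∧
    (1 + π^2*d) ^ (-ν) ≤ ∑' k : Fin d → ℤ, (1 + ∑ i, (t i + 2*π*(k i:ℝ))^2) ^ (-ν) ∧
    ∑' k : Fin d → ℤ, (1 + ∑ i, (t i + 2*π*(k i:ℝ))^2) ^ (-ν)
      ≤ ∑' k : Fin d → ℤ, ∏ i, (1 + π^2*(k i:ℝ)^2) ^ (-(ν/d)) := by
  have hd0 : (0:ℝ) < d := by exact_mod_cast hd
  have hdne : (d:ℝ) ≠ 0 := ne_of_gt hd0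
  have hν0 : 0 < ν := lt_of_le_of_lt (by positivity) hν
  have hμ : 1/2 < ν/d := by rw [lt_div_iff₀ hd0]; nlinarith
  set F : (Fin d → ℝ) → (Fin d → ℤ) → ℝ :=
    fun u k => (1 + ∑ i, (u i + 2*π*(k i:ℝ))^2) ^ (-ν) with hFdef
  have hF0 : ∀ u k, 0 ≤ F u k := fun u k => Real.rpow_nonneg (by positivity) _
  have hP : Summable (fun k : Fin d → ℤ => ∏ i, (1 + π^2*(k i:ℝ)^2) ^ (-(ν/d))) :=
    aux_summable_pi _ (fun n => Real.rpow_nonneg (by positivity) _) (aux_summable_h hμ) d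
  -- box reduction
  set k₀ : Fin d → ℤ := fun i => -round (t i / (2*π)) with hk0
  set s : Fin d → ℝ := fun i => t i + 2*π*(k₀ i : ℝ) with hs
  have hsbox : ∀ i, |s i| ≤ π := by
    intro i
    have key : s i = 2*π * (t i/(2*π) - (round (t i/(2*π)) : ℝ)) := by
      simp only [hs, hk0]
      push_cast
      field_simp
      ring
    rw [key, abs_mul, abs_of_pos (by positivity : (0:ℝ) < 2*π)]
    have h5 := abs_sub_round (t i/(2*π))
    nlinarith [pi_pos]
  have hshift : ∀ k : Fin d → ℤ, F t k = F s ((Equiv.subRight k₀) k) := by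
    intro k
    simp only [hFdef, Equiv.subRight_apply]
    congr 2
    apply Finset.sum_congr rfl
    intro i _
    simp only [hs, Pi.sub_apply]
    push_cast
    ring
  have hFs : Summable (F s) :=
    Summable.of_nonneg_of_le (hF0 s) (fun k => aux_box hd hν0 s hsbox k) hP
  have hFt : Summable (F t) :=
    (((Equiv.subRight k₀).summable_iff).mpr hFs).congr (fun k => (hshift k).symm)
  have htsum : ∑' k, F t k = ∑' k, F s k :=
    (tsum_congr hshift).trans ((Equiv.subRight k₀).tsum_eq (F s))
  refine ⟨hFt, ?_, ?_⟩
  · show (1 + π^2*(d:ℝ)) ^ (-ν) ≤ ∑' k, F t k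
    rw [htsum]
    have hsq : ∀ i, (s i)^2 ≤ π^2 := by
      intro i; have h6 := abs_le.mp (hsbox i); nlinarith
    have hsum0 : ∑ i : Fin d, (s i + 2*π*(((0:Fin d → ℤ)) i:ℝ))^2 ≤ π^2*d := by
      have e1 : ∑ i : Fin d, (s i + 2*π*(((0:Fin d → ℤ)) i:ℝ))^2 = ∑ i : Fin d, (s i)^2 := by
        apply Finset.sum_congr rfl; intro i _; simp
      rw [e1]
      calc ∑ i : Fin d, (s i)^2 ≤ ∑ _i : Fin d, π^2 :=
          Finset.sum_le_sum fun i _ => hsq i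
        _ = π^2*d := by
          rw [Finset.sum_const, Finset.card_univ, Fintype.card_fin, nsmul_eq_mul]; ring
    have hpos : (0:ℝ) < 1 + ∑ i, (s i + 2*π*(((0:Fin d → ℤ)) i:ℝ))^2 := by positivity
    have hA : (1 + π^2*(d:ℝ)) ^ (-ν) ≤ F s 0 :=
      Real.rpow_le_rpow_of_nonpos hpos (by linarith) (neg_nonpos.mpr hν0.le)
    exact hA.trans (Summable.le_tsum hFs 0 (fun j _ => hF0 s j))
  · show ∑' k, F t k ≤ _
    rw [htsum]
    exact Summable.tsum_le_tsum (fun k => aux_box hd hν0 s hsbox k) hFs hP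


/-- Let `d ≥ 1` and `ν > d/2`. Then there are constants `0 < A ≤ B < ∞` such
that for every `ω ∈ ℝ^d`, `A ≤ ∑_{k∈ℤ^d} (1 + ‖ω + 2πk‖²)^{−ν} ≤ B` (Euclidean norm);
this is the Riesz basis condition for the Matérn symbol `(1 + ‖ω‖²)^{ν/2}`. -/
theorem stmt_8 (d : ℕ) (hd : 1 ≤ d) (ν : ℝ) (hν : (d : ℝ) / 2 < ν) :
    ∃ A B : ℝ, 0 < A ∧ A ≤ B ∧
      ∀ ω : EuclideanSpace ℝ (Fin d),
        A ≤ (∑' k : Fin d → ℤ,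
              (1 + ‖ω + (2 * π) •
                  (WithLp.equiv 2 (Fin d → ℝ)).symm (fun i => (k i : ℝ))‖ ^ 2) ^ (-ν)) ∧
        (∑' k : Fin d → ℤ,
              (1 + ‖ω + (2 * π) •
                  (WithLp.equiv 2 (Fin d → ℝ)).symm (fun i => (k i : ℝ))‖ ^ 2) ^ (-ν)) ≤ B := by
  have hrw : ∀ ω : EuclideanSpace ℝ (Fin d),
      (∑' k : Fin d → ℤ,
        (1 + ‖ω + (2 * π) •
            (WithLp.equiv 2 (Fin d → ℝ)).symm (fun i => (k i : ℝ))‖ ^ 2) ^ (-ν))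
      = ∑' k : Fin d → ℤ, (1 + ∑ i, ((fun j => ω j) i + 2*π*(k i:ℝ))^2) ^ (-ν) := by
    intro ω
    apply tsum_congr
    intro k
    congr 1
    congr 1
    rw [EuclideanSpace.norm_eq, Real.sq_sqrt (Finset.sum_nonneg fun i _ => by positivity)]
    apply Finset.sum_congr rfl
    intro i _
    rw [Real.norm_eq_abs, sq_abs]
    congr 1
  refine ⟨(1 + π^2*(d:ℝ)) ^ (-ν),
    ∑' k : Fin d → ℤ, ∏ i, (1 + π^2*(k i:ℝ)^2) ^ (-(ν/d)), by positivity, ?_, ?_⟩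
  · exact le_trans (aux_master hd hν (fun _ => 0)).2.1 (aux_master hd hν (fun _ => 0)).2.2
  · intro ω
    rw [hrw ω]
    exact ⟨(aux_master hd hν (fun j => ω j)).2.1, (aux_master hd hν (fun j => ω j)).2.2⟩
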